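/- Let Ω ⊆ R^n be a bounded domain, ω a positive weight with ω^p ∈ L^1(Ω), and 1 < p,q < ∞ conjugate. Let {U_t}_{t∈Γ} be a countable cover of Ω (up to null sets) by open subsets with overlap bounded by N. Suppose: (i) for a constant C_1, for every t and every u ∈ L^p(U_t, ω^p) one has inf_c ‖u-c‖_{L^p(U_t, ω^p)} ≤ C_1 (∫_{U_t}∫_{U_t} |u(x)-u(y)|^p μ(x,y) dy dx)^{1/p} for a fixed nonnegative measurable kernel μ on Ω×Ω; (ii) every g ∈ L^q(Ω, ω^{-q}) with ∫_Ω g = 0 and support meeting finitely many U_t admits a decomposition g = Σ_t g_t with supp(g_t) ⊆ U_t, ∫_{U_t} g_t = 0, only finitely many g_t nonzero, and Σ_t ‖g_t‖^q_{L^q(U_t,ω^{-q})} ≤ C_0^q ‖g‖^q_{L^q(Ω,ω^{-q})}; (iii) the span of such g together with ω^p·(constants) is dense in L^q(Ω,ω^{-q}) with ‖g‖ ≤ 2‖g + αω^p‖ for such elements. Then for every u ∈ L^p(Ω, ω^p), ‖u - u_{Ω,ω}‖_{L^p(Ω,ω^p)} ≤ 2 C_0 C_1 (Σ_t ∫_{U_t}∫_{U_t}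 |u(x)-u(y)|^p μ(x,y) dy dx)^{1/p}, where u_{Ω,ω} = (∫_Ω u ω^p)/(∫_Ω ω^p). -/

import Mathlib

open MeasureTheory Metric Set ENNReal

lemma holder_pairing {X : Type*} [MeasurableSpace X] (μ : Measure X) {s : Set X}
    (hs : MeasurableSet s) {ω a b : X → ℝ} (hω : Measurable ω) (ha : Measurable a)
    (hb : Measurable b) (hωpos : ∀ x ∈ s, 0 < ω x) {p q : ℝ} (hpq : p.HolderConjugate q) :
    ∫⁻ x in s, ENNReal.ofReal (|a x * b x|) ∂μ ≤
      (∫⁻ x in s, ENNReal.ofReal (|a x| ^ p * ω x ^ p) ∂μ) ^ (1/p) *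
      (∫⁻ x in s, ENNReal.ofReal (|b x| ^ q * ω x ^ (-q)) ∂μ) ^ (1/q) := by
  have hp0 : (0:ℝ) < p := hpq.pos
  have hq0 : (0:ℝ) < q := hpq.symm.pos
  have h1 : ∫⁻ x in s, ENNReal.ofReal (|a x * b x|) ∂μ =
      ∫⁻ x in s, ENNReal.ofReal (|a x| * ω x) * ENNReal.ofReal (|b x| * (ω x)⁻¹) ∂μ := by
    apply setLIntegral_congr_fun hs
    intro x hx; beta_reduce
    have hωx := hωpos x hx
    rw [← ENNReal.ofReal_mul (by positivity)]
    congr 1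
    rw [abs_mul]
    field_simp
  have h2 : (∫⁻ x in s, ENNReal.ofReal (|a x| * ω x) ^ p ∂μ) =
      ∫⁻ x in s, ENNReal.ofReal (|a x| ^ p * ω x ^ p) ∂μ := by
    apply setLIntegral_congr_fun hs
    intro x hx; beta_reduce
    have hωx := hωpos x hx
    rw [ENNReal.ofReal_rpow_of_nonneg (by positivity) hp0.le,
      Real.mul_rpow (abs_nonneg _) hωx.le]
  have h3 : (∫⁻ x in s, ENNReal.ofReal (|b x| * (ω x)⁻¹) ^ q ∂μ) =
      ∫⁻ x in s, ENNReal.ofReal (|b x| ^ q * ω x ^ (-q)) ∂μ := by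
    apply setLIntegral_congr_fun hs
    intro x hx; beta_reduce
    have hωx := hωpos x hx
    rw [ENNReal.ofReal_rpow_of_nonneg (by positivity) hq0.le,
      Real.mul_rpow (abs_nonneg _) (by positivity), Real.inv_rpow hωx.le,
      Real.rpow_neg hωx.le]
  rw [h1, ← h2, ← h3]
  exact ENNReal.lintegral_mul_le_Lp_mul_Lq _ hpq
    ((measurable_ofReal.comp ((ha.abs.mul hω))).aemeasurable)
    ((measurable_ofReal.comp ((hb.abs.mul hω.inv))).aemeasurable)

lemma pairing_integrable {X : Type*} [MeasurableSpace X] (μ : Measure X) {s : Set X}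
    (hs : MeasurableSet s) {ω a b : X → ℝ} (hω : Measurable ω) (ha : Measurable a)
    (hb : Measurable b) (hωpos : ∀ x ∈ s, 0 < ω x) {p q : ℝ} (hpq : p.HolderConjugate q)
    (hA : (∫⁻ x in s, ENNReal.ofReal (|a x| ^ p * ω x ^ p) ∂μ) ≠ ⊤)
    (hB : (∫⁻ x in s, ENNReal.ofReal (|b x| ^ q * ω x ^ (-q)) ∂μ) ≠ ⊤) :
    IntegrableOn (fun x => a x * b x) s μ ∧
    |∫ x in s, a x * b x ∂μ| ≤
      ((∫⁻ x in s, ENNReal.ofReal (|a x| ^ p * ω x ^ p) ∂μ) ^ (1/p) *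
       (∫⁻ x in s, ENNReal.ofReal (|b x| ^ q * ω x ^ (-q)) ∂μ) ^ (1/q)).toReal := by
  have hp0 : (0:ℝ) < p := hpq.pos
  have hq0 : (0:ℝ) < q := hpq.symm.pos
  have key := holder_pairing μ hs hω ha hb hωpos hpq
  have hfin : (∫⁻ x in s, ENNReal.ofReal (|a x| ^ p * ω x ^ p) ∂μ) ^ (1/p) *
      (∫⁻ x in s, ENNReal.ofReal (|b x| ^ q * ω x ^ (-q)) ∂μ) ^ (1/q) ≠ ⊤ := by
    exact (ENNReal.mul_lt_top
      (ENNReal.rpow_ne_top_of_nonneg (by positivity) hA).lt_top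
      (ENNReal.rpow_ne_top_of_nonneg (by positivity) hB).lt_top).ne
  have hnorm : ∀ x, ENNReal.ofReal ‖a x * b x‖ = ENNReal.ofReal (|a x * b x|) := by
    intro x; rw [Real.norm_eq_abs]
  have hint : IntegrableOn (fun x => a x * b x) s μ := by
    refine ⟨(ha.mul hb).aestronglyMeasurable, ?_⟩
    rw [hasFiniteIntegral_iff_norm]
    calc ∫⁻ x in s, ENNReal.ofReal ‖a x * b x‖ ∂μ
        = ∫⁻ x in s, ENNReal.ofReal (|a x * b x|) ∂μ := lintegral_congr fun x => hnorm x
      _ ≤ _ := key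
      _ < ⊤ := hfin.lt_top
  refine ⟨hint, ?_⟩
  rw [← Real.norm_eq_abs]
  calc ‖∫ x in s, a x * b x ∂μ‖ ≤ (∫⁻ x in s, ENNReal.ofReal ‖a x * b x‖ ∂μ).toReal :=
        norm_integral_le_lintegral_norm _
    _ ≤ _ := by
        apply ENNReal.toReal_mono hfin
        calc ∫⁻ x in s, ENNReal.ofReal ‖a x * b x‖ ∂μ
            = ∫⁻ x in s, ENNReal.ofReal (|a x * b x|) ∂μ := lintegral_congr fun x => hnorm x
          _ ≤ _ := key

set_option maxHeartbeats 4000000 in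
/-- Lemma 3.2 of the paper (abstract local-to-global argument): if the local Poincaré
inequality with kernel `μk` holds on each piece `U_t` with uniform constant `C₁`, if
mean-zero functions in `L^q(Ω, ω^{-q})` with "finite" support admit `C`-orthogonal
decompositions subordinate to `{U_t}` with constant `C₀`, and if such functions
together with `ω^p ·` constants are dense (with the norm-`2` projection bound), then
the global weighted Poincaré inequality holds with constant `2 C₀ C₁`. -/
theorem local_to_global_poincare
    (n : ℕ) (hn : 1 ≤ n) (Ω : Set (EuclideanSpace ℝ (Fin n)))
    (hΩopen : IsOpen Ω) (hΩconn : IsConnected Ω) (hΩbdd : Bornology.IsBounded Ω)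
    (p q : ℝ) (hp : 1 < p) (hq : 1 < q) (hpq : 1 / p + 1 / q = 1)
    (ω : EuclideanSpace ℝ (Fin n) → ℝ) (hωmeas : Measurable ω)
    (hωpos : ∀ x ∈ Ω, 0 < ω x)
    (hωLp : IntegrableOn (fun x => ω x ^ p) Ω volume)
    (Γ : Type*) [Countable Γ] (U : Γ → Set (EuclideanSpace ℝ (Fin n)))
    (hUopen : ∀ t, IsOpen (U t)) (hUΩ : ∀ t, U t ⊆ Ω)
    (hcover : volume (Ω \ ⋃ t, U t) = 0)
    (N : ℕ) (hN : 1 ≤ N)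
    (hoverlap : ∀ x, ∑' t, (U t).indicator (fun _ => (1 : ℝ≥0∞)) x ≤ N)
    (μk : EuclideanSpace ℝ (Fin n) → EuclideanSpace ℝ (Fin n) → ℝ≥0∞)
    (hμk : Measurable (Function.uncurry μk))
    (C₀ C₁ : ℝ) (hC₀ : 0 < C₀) (hC₁ : 0 < C₁)
    -- (i) the local inequality on each U_t with uniform constant C₁
    (hlocal : ∀ t, ∀ v : EuclideanSpace ℝ (Fin n) → ℝ, Measurable v →
      ⨅ c : ℝ, ∫⁻ x in U t, ENNReal.ofReal (|v x - c| ^ p * ω x ^ p) ≤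
        ENNReal.ofReal C₁ ^ p *
          ∫⁻ x in U t, ∫⁻ y in U t, ENNReal.ofReal (|v x - v y| ^ p) * μk x y)
    -- (ii) C-orthogonal decompositions with constant C₀
    (hdecomp : ∀ g : EuclideanSpace ℝ (Fin n) → ℝ, Measurable g →
      IntegrableOn g Ω volume → (∫ x in Ω, g x) = 0 →
      {t | (Function.support g ∩ U t).Nonempty}.Finite →
      (∫⁻ x in Ω, ENNReal.ofReal (|g x| ^ q * ω x ^ (-q))) ≠ ⊤ →
      ∃ gt : Γ → EuclideanSpace ℝ (Fin n) → ℝ,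
        {t | gt t ≠ 0}.Finite ∧ (∀ t, Measurable (gt t)) ∧
        (∀ x ∈ Ω, g x = ∑' t, gt t x) ∧
        (∀ t, Function.support (gt t) ⊆ U t) ∧
        (∀ t, (∫ x in U t, gt t x) = 0) ∧
        ∑' t, ∫⁻ x in U t, ENNReal.ofReal (|gt t x| ^ q * ω x ^ (-q)) ≤
          ENNReal.ofReal C₀ ^ q *
            ∫⁻ x in Ω, ENNReal.ofReal (|g x| ^ q * ω x ^ (-q)))
    -- (iii) density of W₀ ⊕ ω^p·C in L^q(Ω, ω^{-q}), with the projection bound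
    (hdense : ∀ f : EuclideanSpace ℝ (Fin n) → ℝ, Measurable f →
      (∫⁻ x in Ω, ENNReal.ofReal (|f x| ^ q * ω x ^ (-q))) ≠ ⊤ →
      ∀ ε : ℝ≥0∞, 0 < ε →
      ∃ (g : EuclideanSpace ℝ (Fin n) → ℝ) (α : ℝ), Measurable g ∧
        IntegrableOn g Ω volume ∧ (∫ x in Ω, g x) = 0 ∧
        {t | (Function.support g ∩ U t).Nonempty}.Finite ∧
        (∫⁻ x in Ω, ENNReal.ofReal (|g x| ^ q * ω x ^ (-q))) ≠ ⊤ ∧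
        (∫⁻ x in Ω, ENNReal.ofReal (|g x| ^ q * ω x ^ (-q))) ≤
          (2 : ℝ≥0∞) ^ q *
            ∫⁻ x in Ω, ENNReal.ofReal (|g x + α * ω x ^ p| ^ q * ω x ^ (-q)) ∧
        ∫⁻ x in Ω, ENNReal.ofReal (|f x - (g x + α * ω x ^ p)| ^ q * ω x ^ (-q)) < ε)
    -- the function u ∈ L^p(Ω, ω^p)
    (u : EuclideanSpace ℝ (Fin n) → ℝ) (hu : Measurable u)
    (huLp : ∫⁻ x in Ω, ENNReal.ofReal (|u x| ^ p * ω x ^ p) ≠ ⊤)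
    (huω : IntegrableOn (fun x => u x * ω x ^ p) Ω volume) :
    ∫⁻ x in Ω, ENNReal.ofReal
        (|u x - (∫ z in Ω, u z * ω z ^ p) / (∫ z in Ω, ω z ^ p)| ^ p * ω x ^ p) ≤
      ENNReal.ofReal (2 * C₀ * C₁) ^ p *
        ∑' t, ∫⁻ x in U t, ∫⁻ y in U t,
          ENNReal.ofReal (|u x - u y| ^ p) * μk x y := by
  classical
  have hp0 : (0:ℝ) < p := one_pos.trans hp
  have hq0 : (0:ℝ) < q := one_pos.trans hq
  have hconj : p.HolderConjugate q := ⟨by rw [inv_one, ← hpq]; simp [one_div], hp0, hq0⟩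
  have hΩmeas : MeasurableSet Ω := hΩopen.measurableSet
  set c₀ := (∫ z in Ω, u z * ω z ^ p) / (∫ z in Ω, ω z ^ p) with hc₀def
  set v : EuclideanSpace ℝ (Fin n) → ℝ := fun x => u x - c₀ with hvdef
  have hvmeas : Measurable v := hu.sub measurable_const
  set Et := fun t => ∫⁻ x in U t, ∫⁻ y in U t, ENNReal.ofReal (|u x - u y| ^ p) * μk x y
    with hEtdef
  set E := ∑' t, Et t with hEdef
  set I := ∫⁻ x in Ω, ENNReal.ofReal (|v x| ^ p * ω x ^ p) with hIdef
  show I ≤ ENNReal.ofReal (2 * C₀ * C₁) ^ p * E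
  -- weight facts
  have hWfin : (∫⁻ x in Ω, ENNReal.ofReal (ω x ^ p)) ≠ ⊤ := by
    have h := hωLp.2
    rw [hasFiniteIntegral_iff_norm] at h
    refine (lt_of_le_of_lt (lintegral_mono fun x => ?_) h).ne
    calc ENNReal.ofReal (ω x ^ p) ≤ ENNReal.ofReal (|ω x ^ p|) :=
          ENNReal.ofReal_le_ofReal (le_abs_self _)
      _ = ENNReal.ofReal ‖ω x ^ p‖ := by rw [Real.norm_eq_abs]
  have hωint_pos : 0 < ∫ x in Ω, ω x ^ p := by
    rw [setIntegral_pos_iff_support_of_nonneg_ae ?h1 hωLp]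
    · refine lt_of_lt_of_le (hΩopen.measure_pos volume hΩconn.nonempty) (measure_mono ?_)
      intro x hx
      refine ⟨?_, hx⟩
      simp only [Function.mem_support]
      exact (Real.rpow_pos_of_pos (hωpos x hx) p).ne'
    case h1 =>
      filter_upwards [ae_restrict_mem hΩmeas] with x hx
      exact (Real.rpow_pos_of_pos (hωpos x hx) p).le
  -- I is finite
  have hIne : I ≠ ⊤ := by
    set Φu : EuclideanSpace ℝ (Fin n) → ℝ≥0∞ := fun x => ENNReal.ofReal (|u x| * ω x) with hΦu
    set Φc : EuclideanSpace ℝ (Fin n) → ℝ≥0∞ := fun x => ENNReal.ofReal (|c₀| * ω x) with hΦc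
    have hΦum : Measurable Φu := by fun_prop
    have hΦcm : Measurable Φc := by fun_prop
    have hu' : (∫⁻ x in Ω, Φu x ^ p) ≠ ⊤ := by
      refine ne_top_of_le_ne_top huLp (le_of_eq ?_)
      apply setLIntegral_congr_fun hΩmeas
      intro x hx; beta_reduce
      have hωx := hωpos x hx
      rw [hΦu, ENNReal.ofReal_rpow_of_nonneg (by positivity) hp0.le,
        Real.mul_rpow (abs_nonneg _) (hωpos x hx).le]
    have hc' : (∫⁻ x in Ω, Φc x ^ p) ≠ ⊤ := by
      have he : (∫⁻ x in Ω, Φc x ^ p) =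
          ENNReal.ofReal (|c₀| ^ p) * ∫⁻ x in Ω, ENNReal.ofReal (ω x ^ p) := by
        rw [← lintegral_const_mul _ (by fun_prop : Measurable fun x => ENNReal.ofReal (ω x ^ p))]
        apply setLIntegral_congr_fun hΩmeas
        intro x hx; beta_reduce
        have hωx := hωpos x hx
        rw [hΦc, ENNReal.ofReal_rpow_of_nonneg (by positivity) hp0.le,
          Real.mul_rpow (abs_nonneg _) (hωpos x hx).le, ENNReal.ofReal_mul (by positivity)]
      rw [he]
      exact ENNReal.mul_ne_top ENNReal.ofReal_ne_top hWfin
    have hIle : I ≤ ∫⁻ x in Ω, ((Φu + Φc) x) ^ p := by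
      rw [hIdef]
      apply lintegral_mono_ae
      filter_upwards [ae_restrict_mem hΩmeas] with x hx
      have hωx := hωpos x hx
      calc ENNReal.ofReal (|v x| ^ p * ω x ^ p)
          = ENNReal.ofReal (|v x| * ω x) ^ p := by
            rw [ENNReal.ofReal_rpow_of_nonneg (by positivity) hp0.le,
              Real.mul_rpow (abs_nonneg _) hωx.le]
        _ ≤ ((Φu + Φc) x) ^ p := by
            apply ENNReal.rpow_le_rpow _ hp0.le
            simp only [Pi.add_apply, hΦu, hΦc]
            rw [← ENNReal.ofReal_add (by positivity) (by positivity)]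
            apply ENNReal.ofReal_le_ofReal
            have habs : |v x| ≤ |u x| + |c₀| := by
              rw [hvdef]
              exact (abs_sub _ _)
            nlinarith [abs_nonneg (v x), hωx.le, abs_nonneg (u x), abs_nonneg c₀]
    have hmink := ENNReal.lintegral_Lp_add_le (μ := volume.restrict Ω)
      hΦum.aemeasurable hΦcm.aemeasurable hp.le
    have hfin2 : (∫⁻ x in Ω, ((Φu + Φc) x) ^ p) ≠ ⊤ := by
      have h1 : (∫⁻ x in Ω, ((Φu + Φc) x) ^ p) =
          ((∫⁻ x in Ω, ((Φu + Φc) x) ^ p) ^ (1/p)) ^ p := by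
        rw [← ENNReal.rpow_mul, one_div_mul_cancel hp0.ne', ENNReal.rpow_one]
      rw [h1]
      apply ENNReal.rpow_ne_top_of_nonneg hp0.le
      refine ne_top_of_le_ne_top ?_ hmink
      exact (ENNReal.add_lt_top.mpr ⟨(ENNReal.rpow_ne_top_of_nonneg (by positivity) hu').lt_top,
        (ENNReal.rpow_ne_top_of_nonneg (by positivity) hc').lt_top⟩).ne
    exact ne_top_of_le_ne_top hfin2 hIle
  -- mean-zero property of v
  have hmean : ∫ x in Ω, v x * ω x ^ p = 0 := by
    have heq : (fun x => v x * ω x ^ p) = fun x => u x * ω x ^ p - c₀ * ω x ^ p := by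
      funext x; rw [hvdef]; ring
    rw [heq, integral_sub huω (hωLp.integrable.const_mul c₀), integral_const_mul, hc₀def]
    field_simp
    ring
  -- trivial cases
  by_cases hEtop : E = ⊤
  · rw [hEtop, ENNReal.mul_top
      (ENNReal.rpow_pos (ENNReal.ofReal_pos.mpr (by positivity)) ENNReal.ofReal_ne_top).ne']
    exact le_top
  have hEtne : ∀ t, Et t ≠ ⊤ := fun t => ne_top_of_le_ne_top hEtop (ENNReal.le_tsum t)
  by_cases hI0 : I = 0
  · rw [hI0]; exact zero_le
  -- local inequality in terms of v
  have hEtv : ∀ t, (∫⁻ x in U t, ∫⁻ y in U t, ENNReal.ofReal (|v x - v y| ^ p) * μk x y)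
      = Et t := by
    intro t
    refine lintegral_congr fun x => lintegral_congr fun y => ?_
    rw [hvdef]
    simp only [sub_sub_sub_cancel_right]
  have hlocal' : ∀ t, (⨅ c : ℝ, ∫⁻ x in U t, ENNReal.ofReal (|v x - c| ^ p * ω x ^ p)) ≤
      ENNReal.ofReal C₁ ^ p * Et t := fun t =>
    (hlocal t v hvmeas).trans_eq (by rw [hEtv t])
  obtain ⟨k, hk⟩ := Countable.exists_injective_nat Γ
  -- the dual extremal function f
  set sgn : EuclideanSpace ℝ (Fin n) → ℝ := fun x => if 0 ≤ v x then (1:ℝ) else -1 with hsgn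
  have hsgnmeas : Measurable sgn :=
    Measurable.ite (measurableSet_le measurable_const hvmeas) measurable_const measurable_const
  set f : EuclideanSpace ℝ (Fin n) → ℝ := fun x => sgn x * |v x| ^ (p-1) * ω x ^ p with hfdef
  have hfmeas : Measurable f := by
    apply Measurable.mul ?_ (by fun_prop)
    apply Measurable.mul hsgnmeas (by fun_prop)
  have hsv : ∀ x, sgn x * v x = |v x| := by
    intro x
    rw [hsgn]
    by_cases h : 0 ≤ v x
    · simp [h, abs_of_nonneg h]
    · simp [h, abs_of_neg (lt_of_not_ge h)]
  have habspow : ∀ x, |v x| * |v x| ^ (p-1) = |v x| ^ p := by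
    intro x
    have h1 : |v x| ^ ((1:ℝ) + (p-1)) = |v x| ^ (1:ℝ) * |v x| ^ (p-1) :=
      Real.rpow_add' (abs_nonneg _) (by rw [show (1:ℝ)+(p-1) = p by ring]; exact hp0.ne')
    rw [show (1:ℝ) + (p-1) = p by ring, Real.rpow_one] at h1
    rw [h1]
  have hvf : ∀ x ∈ Ω, v x * f x = |v x| ^ p * ω x ^ p := by
    intro x hx
    have h2 : v x * f x = (sgn x * v x) * |v x| ^ (p-1) * ω x ^ p := by rw [hfdef]; ring
    rw [h2, hsv x, habspow x]
  have hfq : ∀ x ∈ Ω, |f x| ^ q * ω x ^ (-q) = |v x| ^ p * ω x ^ p := by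
    intro x hx
    have hωx := hωpos x hx
    have habs : |f x| = |v x| ^ (p-1) * ω x ^ p := by
      rw [hfdef]
      simp only []
      rw [abs_mul, abs_mul]
      have h1 : |sgn x| = 1 := by
        rw [hsgn]; by_cases h : 0 ≤ v x <;> simp [h]
      rw [h1, one_mul, abs_of_nonneg (Real.rpow_nonneg (abs_nonneg _) _),
        abs_of_nonneg (Real.rpow_pos_of_pos hωx p).le]
    rw [habs, Real.mul_rpow (Real.rpow_nonneg (abs_nonneg _) _) (Real.rpow_pos_of_pos hωx p).le,
      ← Real.rpow_mul (abs_nonneg _), hconj.sub_one_mul_conj, ← Real.rpow_mul hωx.le,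
      mul_assoc, ← Real.rpow_add hωx]
    congr 2
    nlinarith [hconj.sub_one_mul_conj]
  have hF : (∫⁻ x in Ω, ENNReal.ofReal (|f x| ^ q * ω x ^ (-q))) = I := by
    rw [hIdef]
    apply setLIntegral_congr_fun hΩmeas
    intro x hx; beta_reduce
    rw [hfq x hx]
  have hvfI : ∫ x in Ω, v x * f x = I.toReal := by
    have h1 : ∫ x in Ω, v x * f x = ∫ x in Ω, |v x| ^ p * ω x ^ p :=
      setIntegral_congr_fun hΩmeas (fun x hx => hvf x hx)
    rw [h1, integral_eq_lintegral_of_nonneg_ae ?nonneg ?meas]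
    case nonneg =>
      filter_upwards [ae_restrict_mem hΩmeas] with x hx
      exact mul_nonneg (Real.rpow_nonneg (abs_nonneg _) _) (Real.rpow_pos_of_pos (hωpos x hx) p).le
    case meas => exact (by fun_prop : Measurable fun x => |v x| ^ p * ω x ^ p).aestronglyMeasurable
  -- the key quantitative inequality
  have key : ∀ ε : ℝ, 0 < ε → I.toReal ≤ I.toReal ^ (1/p) * ε ^ (1/q)
      + 2 * C₀ * ((C₁ ^ p * E.toReal + 2 * ε) ^ (1/p)) * (I.toReal ^ (1/q) + ε ^ (1/q)) := by
    intro ε hε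
    obtain ⟨g, α, hgmeas, hgint, hgmean, hgsuppfin, hGne, hGproj, hclose⟩ :=
      hdense f hfmeas (by rw [hF]; exact hIne) (ENNReal.ofReal ε) (ENNReal.ofReal_pos.mpr hε)
    set G := ∫⁻ x in Ω, ENNReal.ofReal (|g x| ^ q * ω x ^ (-q)) with hGdef
    set r : EuclideanSpace ℝ (Fin n) → ℝ := fun x => f x - (g x + α * ω x ^ p) with hrdef
    have hrmeas : Measurable r := by
      apply Measurable.sub hfmeas
      apply Measurable.add hgmeas
      fun_prop
    have hcloseR : (∫⁻ x in Ω, ENNReal.ofReal (|r x| ^ q * ω x ^ (-q))) < ENNReal.ofReal ε :=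
      hclose
    set R := ∫⁻ x in Ω, ENNReal.ofReal (|r x| ^ q * ω x ^ (-q)) with hRdef
    have hRne : R ≠ ⊤ := (hcloseR.trans ENNReal.ofReal_lt_top).ne
    obtain ⟨gt, hSfin, hgtmeas, hgsum, hgtsupp, hgtmean, hgtbound⟩ :=
      hdecomp g hgmeas hgint hgmean hgsuppfin hGne
    set Bq := fun t => ∫⁻ x in U t, ENNReal.ofReal (|gt t x| ^ q * ω x ^ (-q)) with hBqdef
    have hC₀G : ENNReal.ofReal C₀ ^ q * G ≠ ⊤ :=
      ENNReal.mul_ne_top (ENNReal.rpow_ne_top_of_nonneg hq0.le ENNReal.ofReal_ne_top) hGne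
    have hBqfin : ∀ t, Bq t ≠ ⊤ := fun t =>
      ne_top_of_le_ne_top hC₀G ((ENNReal.le_tsum t).trans hgtbound)
    -- choose near-optimal constants c_t
    have hchoose : ∀ t, ∃ c : ℝ, (∫⁻ x in U t, ENNReal.ofReal (|v x - c| ^ p * ω x ^ p)) <
        ENNReal.ofReal C₁ ^ p * Et t + ENNReal.ofReal ε * (2⁻¹ : ℝ≥0∞) ^ (k t) := by
      intro t
      rw [← iInf_lt_iff]
      refine lt_of_le_of_lt (hlocal' t) (ENNReal.lt_add_right ?_ ?_)
      · exact ENNReal.mul_ne_top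
          (ENNReal.rpow_ne_top_of_nonneg hp0.le ENNReal.ofReal_ne_top) (hEtne t)
      · exact mul_ne_zero (ENNReal.ofReal_pos.mpr hε).ne'
          (pow_ne_zero _ (by simp))
    choose ct hct using hchoose
    set L := fun t => ∫⁻ x in U t, ENNReal.ofReal (|v x - ct t| ^ p * ω x ^ p) with hLdef
    have hLfin : ∀ t, L t ≠ ⊤ := by
      intro t
      refine ((hct t).trans_le le_top).ne -- wrong: gives L t < ⊤? (hct t) : L t < RHS; RHS ≤ ⊤
    have hLsumfin : ENNReal.ofReal C₁ ^ p * E + ENNReal.ofReal ε * 2 ≠ ⊤ := by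
      apply ENNReal.add_ne_top.mpr
      exact ⟨ENNReal.mul_ne_top (ENNReal.rpow_ne_top_of_nonneg hp0.le ENNReal.ofReal_ne_top)
        hEtop, ENNReal.mul_ne_top ENNReal.ofReal_ne_top (by simp)⟩
    have hLsum : ∑' t, L t ≤ ENNReal.ofReal C₁ ^ p * E + ENNReal.ofReal ε * 2 := by
      calc ∑' t, L t
          ≤ ∑' t, (ENNReal.ofReal C₁ ^ p * Et t + ENNReal.ofReal ε * (2⁻¹:ℝ≥0∞) ^ k t) :=
            ENNReal.tsum_le_tsum fun t => (hct t).le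
        _ = ENNReal.ofReal C₁ ^ p * E + ENNReal.ofReal ε * ∑' t, (2⁻¹:ℝ≥0∞) ^ k t := by
            rw [ENNReal.tsum_add, ENNReal.tsum_mul_left, ENNReal.tsum_mul_left]
        _ ≤ _ := by
            gcongr
            calc ∑' t, (2⁻¹:ℝ≥0∞) ^ k t ≤ ∑' m : ℕ, (2⁻¹:ℝ≥0∞) ^ m :=
                ENNReal.summable.tsum_le_tsum_of_inj k hk (fun _ _ => zero_le) (fun t => le_rfl)
                  ENNReal.summable
              _ = (1 - 2⁻¹)⁻¹ := ENNReal.tsum_geometric _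
              _ = 2 := by norm_num
    -- Minkowski : control of ‖g‖ via the projection bound
    have hHbound : (∫⁻ x in Ω, ENNReal.ofReal (|g x + α * ω x ^ p| ^ q * ω x ^ (-q))) ^ (1/q)
        ≤ I ^ (1/q) + ENNReal.ofReal ε ^ (1/q) := by
      set Φf : EuclideanSpace ℝ (Fin n) → ℝ≥0∞ := fun x => ENNReal.ofReal (|f x| * (ω x)⁻¹)
        with hΦf
      set Φr : EuclideanSpace ℝ (Fin n) → ℝ≥0∞ := fun x => ENNReal.ofReal (|r x| * (ω x)⁻¹)
        with hΦr
      have hΦfm : Measurable Φf := by fun_prop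
      have hΦrm : Measurable Φr := by fun_prop
      have h1 : (∫⁻ x in Ω, ENNReal.ofReal (|g x + α * ω x ^ p| ^ q * ω x ^ (-q)))
          ≤ ∫⁻ x in Ω, ((Φf + Φr) x) ^ q := by
        apply lintegral_mono_ae
        filter_upwards [ae_restrict_mem hΩmeas] with x hx
        have hωx := hωpos x hx
        calc ENNReal.ofReal (|g x + α * ω x ^ p| ^ q * ω x ^ (-q))
            = ENNReal.ofReal (|g x + α * ω x ^ p| * (ω x)⁻¹) ^ q := by
              rw [ENNReal.ofReal_rpow_of_nonneg (by positivity) hq0.le,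
                Real.mul_rpow (abs_nonneg _) (by positivity), Real.inv_rpow hωx.le,
                Real.rpow_neg hωx.le]
          _ ≤ ((Φf + Φr) x) ^ q := by
              apply ENNReal.rpow_le_rpow _ hq0.le
              simp only [Pi.add_apply, hΦf, hΦr]
              rw [← ENNReal.ofReal_add (by positivity) (by positivity)]
              apply ENNReal.ofReal_le_ofReal
              have h2 : |g x + α * ω x ^ p| ≤ |f x| + |r x| := by
                have h3 : g x + α * ω x ^ p = f x - r x := by rw [hrdef]; ring
                rw [h3]
                exact abs_sub _ _
              have h4 : (0:ℝ) ≤ (ω x)⁻¹ := by positivity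
              nlinarith [abs_nonneg (f x), abs_nonneg (r x)]
      have h2 := ENNReal.lintegral_Lp_add_le (μ := volume.restrict Ω)
        hΦfm.aemeasurable hΦrm.aemeasurable hq.le
      have h3 : (∫⁻ x in Ω, Φf x ^ q) = I := by
        rw [← hF]
        apply setLIntegral_congr_fun hΩmeas
        intro x hx; beta_reduce
        have hωx := hωpos x hx
        rw [hΦf, ENNReal.ofReal_rpow_of_nonneg (by positivity) hq0.le,
          Real.mul_rpow (abs_nonneg _) (by positivity), Real.inv_rpow hωx.le,
          Real.rpow_neg hωx.le]
      have h4 : (∫⁻ x in Ω, Φr x ^ q) = R := by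
        rw [hRdef]
        apply setLIntegral_congr_fun hΩmeas
        intro x hx; beta_reduce
        have hωx := hωpos x hx
        rw [hΦr, ENNReal.ofReal_rpow_of_nonneg (by positivity) hq0.le,
          Real.mul_rpow (abs_nonneg _) (by positivity), Real.inv_rpow hωx.le,
          Real.rpow_neg hωx.le]
      calc (∫⁻ x in Ω, ENNReal.ofReal (|g x + α * ω x ^ p| ^ q * ω x ^ (-q))) ^ (1/q)
          ≤ (∫⁻ x in Ω, ((Φf + Φr) x) ^ q) ^ (1/q) := ENNReal.rpow_le_rpow h1 (by positivity)
        _ ≤ (∫⁻ x in Ω, Φf x ^ q) ^ (1/q) + (∫⁻ x in Ω, Φr x ^ q) ^ (1/q) := h2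
        _ = I ^ (1/q) + R ^ (1/q) := by rw [h3, h4]
        _ ≤ I ^ (1/q) + ENNReal.ofReal ε ^ (1/q) := by
            gcongr

    have hGq : G ^ (1/q) ≤ 2 * (I ^ (1/q) + ENNReal.ofReal ε ^ (1/q)) := by
      calc G ^ (1/q)
          ≤ ((2:ℝ≥0∞) ^ q *
            ∫⁻ x in Ω, ENNReal.ofReal (|g x + α * ω x ^ p| ^ q * ω x ^ (-q))) ^ (1/q) :=
            ENNReal.rpow_le_rpow hGproj (by positivity)
        _ = 2 * (∫⁻ x in Ω, ENNReal.ofReal (|g x + α * ω x ^ p| ^ q * ω x ^ (-q))) ^ (1/q) := by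
            rw [ENNReal.mul_rpow_of_nonneg _ _ (by positivity), ← ENNReal.rpow_mul,
              mul_one_div, div_self hq0.ne', ENNReal.rpow_one]
        _ ≤ 2 * (I ^ (1/q) + ENNReal.ofReal ε ^ (1/q)) := by gcongr
    -- pairing on each piece
    have hωposU : ∀ t, ∀ x ∈ U t, 0 < ω x := fun t x hx => hωpos x (hUΩ t hx)
    have hpair : ∀ t, IntegrableOn (fun x => (v x - ct t) * gt t x) (U t) volume ∧
        |∫ x in U t, (v x - ct t) * gt t x| ≤ ((L t) ^ (1/p) * (Bq t) ^ (1/q)).toReal :=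
      fun t => pairing_integrable (a := fun x => v x - ct t) (b := gt t) volume
        (hUopen t).measurableSet hωmeas (hvmeas.sub measurable_const) (hgtmeas t)
        (hωposU t) hconj (hLfin t) (hBqfin t)
    -- each gt t is integrable on U t
    have hgtint : ∀ t, IntegrableOn (gt t) (U t) volume := by
      intro t
      have hA : (∫⁻ x in U t, ENNReal.ofReal (|(1:ℝ)| ^ p * ω x ^ p)) ≠ ⊤ := by
        refine ne_top_of_le_ne_top hWfin (le_trans (le_of_eq ?_) (lintegral_mono_set (hUΩ t)))
        apply lintegral_congr fun x => ?_
        norm_num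
      have h := pairing_integrable (a := fun _ => (1:ℝ)) (b := gt t) volume
        (hUopen t).measurableSet hωmeas measurable_const (hgtmeas t)
        (hωposU t) hconj hA (hBqfin t)
      have h1 := h.1
      simpa using h1
    -- reduce ∫_Ω v·gt to ∫_{U t} (v - c_t)·gt
    have hvgt_supp : ∀ t, Function.support (fun x => v x * gt t x) ⊆ U t := by
      intro t x hx
      exact hgtsupp t (Function.mem_support.mpr (right_ne_zero_of_mul (Function.mem_support.mp hx)))
    have hvgtint : ∀ t, IntegrableOn (fun x => v x * gt t x) (U t) volume := by
      intro t
      have h3 : (fun x => v x * gt t x)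
          = fun x => (v x - ct t) * gt t x + ct t * gt t x := funext fun x => by ring
      rw [h3]
      exact (hpair t).1.add ((hgtint t).const_mul _)
    have hvgt_glob : ∀ t, Integrable (fun x => v x * gt t x) volume := fun t =>
      (integrableOn_iff_integrable_of_support_subset (hvgt_supp t)).mp (hvgtint t)
    have hsplit : ∀ t, ∫ x in Ω, v x * gt t x = ∫ x in U t, (v x - ct t) * gt t x := by
      intro t
      have e1 : ∫ x in Ω, v x * gt t x = ∫ x, v x * gt t x :=
        setIntegral_eq_integral_of_forall_compl_eq_zero fun x hx => by
          have h0 : gt t x = 0 := by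
            by_contra h0; exact hx (hUΩ t (hgtsupp t (Function.mem_support.mpr h0)))
          simp [h0]
      have e2 : ∫ x in U t, v x * gt t x = ∫ x, v x * gt t x :=
        setIntegral_eq_integral_of_forall_compl_eq_zero fun x hx => by
          have h0 : gt t x = 0 := by
            by_contra h0; exact hx (hgtsupp t (Function.mem_support.mpr h0))
          simp [h0]
      have e3 : ∫ x in U t, v x * gt t x
          = ∫ x in U t, ((v x - ct t) * gt t x + ct t * gt t x) :=
        integral_congr_ae (Filter.Eventually.of_forall fun x => by ring)
      rw [e1, ← e2, e3, integral_add ((hpair t).1) ((hgtint t).const_mul _),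
        integral_const_mul, hgtmean t, mul_zero, add_zero]
    -- decompose the pairing with g into the pieces
    have hvg_eq : ∫ x in Ω, v x * g x = ∑ t ∈ hSfin.toFinset, ∫ x in Ω, v x * gt t x := by
      rw [← integral_finset_sum _ (fun t _ => (hvgt_glob t).integrableOn)]
      apply setIntegral_congr_fun hΩmeas
      intro x hx
      have h5 : ∑' t, gt t x = ∑ t ∈ hSfin.toFinset, gt t x := by
        apply tsum_eq_sum
        intro t ht
        have h6 : gt t = 0 := by
          by_contra h7; exact ht (hSfin.mem_toFinset.mpr h7)
        rw [h6]; rfl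
      show v x * g x = ∑ t ∈ hSfin.toFinset, v x * gt t x
      rw [hgsum x hx, h5, Finset.mul_sum]
    -- Hölder for the sum over Γ
    have hBqzero : ∀ t ∉ hSfin.toFinset, (L t) ^ (1/p) * (Bq t) ^ (1/q) = 0 := by
      intro t ht
      have h6 : gt t = 0 := by by_contra h7; exact ht (hSfin.mem_toFinset.mpr h7)
      have h8 : Bq t = 0 := by
        rw [hBqdef]
        simp only [h6]
        have : ∀ x, ENNReal.ofReal (|(0:EuclideanSpace ℝ (Fin n) → ℝ) x| ^ q * ω x ^ (-q)) = 0 := by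
          intro x
          simp [Real.zero_rpow hq0.ne']
        simp only [this, lintegral_zero]
      rw [h8, ENNReal.zero_rpow_of_pos (by positivity), mul_zero]
    have htsum_holder : ∑' t, (L t) ^ (1/p) * (Bq t) ^ (1/q)
        ≤ (∑' t, L t) ^ (1/p) * (∑' t, Bq t) ^ (1/q) := by
      letI : MeasurableSpace Γ := ⊤
      haveI : MeasurableSingletonClass Γ := ⟨fun _ => trivial⟩
      have hmeas1 : Measurable fun t => (L t) ^ (1/p) := fun s _ => trivial
      have hmeas2 : Measurable fun t => (Bq t) ^ (1/q) := fun s _ => trivial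
      have h := ENNReal.lintegral_mul_le_Lp_mul_Lq (Measure.count : Measure Γ) hconj
        hmeas1.aemeasurable hmeas2.aemeasurable
      simp only [Pi.mul_apply] at h
      rw [lintegral_count, lintegral_count, lintegral_count] at h
      simpa only [← ENNReal.rpow_mul, one_div_mul_cancel hp0.ne',
        one_div_mul_cancel hq0.ne', ENNReal.rpow_one] using h
    have hsumLfin : (∑' t, L t) ≠ ⊤ := ne_top_of_le_ne_top hLsumfin hLsum
    have hsumBfin : (∑' t, Bq t) ≠ ⊤ := ne_top_of_le_ne_top hC₀G hgtbound
    have hprodfin : (∑' t, L t) ^ (1/p) * (∑' t, Bq t) ^ (1/q) ≠ ⊤ :=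
      ENNReal.mul_ne_top (ENNReal.rpow_ne_top_of_nonneg (by positivity) hsumLfin)
        (ENNReal.rpow_ne_top_of_nonneg (by positivity) hsumBfin)
    have hvg_bound : ∫ x in Ω, v x * g x
        ≤ ((∑' t, L t) ^ (1/p) * (∑' t, Bq t) ^ (1/q)).toReal := by
      rw [hvg_eq]
      calc ∑ t ∈ hSfin.toFinset, ∫ x in Ω, v x * gt t x
          ≤ ∑ t ∈ hSfin.toFinset, ((L t) ^ (1/p) * (Bq t) ^ (1/q)).toReal := by
            apply Finset.sum_le_sum
            intro t _
            rw [hsplit t]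
            exact le_trans (le_abs_self _) (hpair t).2
        _ = (∑ t ∈ hSfin.toFinset, (L t) ^ (1/p) * (Bq t) ^ (1/q)).toReal :=
            (ENNReal.toReal_sum fun t _ => ENNReal.mul_ne_top
              (ENNReal.rpow_ne_top_of_nonneg (by positivity) (hLfin t))
              (ENNReal.rpow_ne_top_of_nonneg (by positivity) (hBqfin t))).symm
        _ = (∑' t, (L t) ^ (1/p) * (Bq t) ^ (1/q)).toReal := by rw [tsum_eq_sum hBqzero]
        _ ≤ _ := ENNReal.toReal_mono hprodfin htsum_holder
    -- pairing with r and with f on Ω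
    have hpairR := pairing_integrable (a := v) (b := r) volume hΩmeas hωmeas hvmeas hrmeas
      hωpos hconj hIne hRne
    have hpairG_int : IntegrableOn (fun x => v x * g x) Ω volume :=
      (pairing_integrable (a := v) (b := g) volume hΩmeas hωmeas hvmeas hgmeas
        hωpos hconj hIne hGne).1
    have hvω : IntegrableOn (fun x => v x * ω x ^ p) Ω volume := by
      have h : (fun x => v x * ω x ^ p) = fun x => u x * ω x ^ p - c₀ * ω x ^ p :=
        funext fun x => by rw [hvdef]; ring
      rw [h]
      exact huω.sub (hωLp.integrable.const_mul c₀)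
    have hIsplit : I.toReal
        = (∫ x in Ω, v x * g x) + α * (∫ x in Ω, v x * ω x ^ p) + ∫ x in Ω, v x * r x := by
      rw [← hvfI]
      have e : ∫ x in Ω, v x * f x
          = ∫ x in Ω, (v x * g x + α * (v x * ω x ^ p) + v x * r x) :=
        integral_congr_ae (Filter.Eventually.of_forall fun x => by rw [hrdef]; ring)
      have i1 : Integrable (fun x => v x * g x + α * (v x * ω x ^ p)) (volume.restrict Ω) :=
        hpairG_int.add (hvω.const_mul α)
      rw [e, integral_add i1 hpairR.1, integral_add hpairG_int (hvω.const_mul α),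
        integral_const_mul]
    have hRbound : |∫ x in Ω, v x * r x| ≤ I.toReal ^ (1/p) * ε ^ (1/q) := by
      refine le_trans hpairR.2 ?_
      calc (I ^ (1/p) * R ^ (1/q)).toReal
          ≤ (I ^ (1/p) * ENNReal.ofReal ε ^ (1/q)).toReal := by
            apply ENNReal.toReal_mono (ENNReal.mul_ne_top
              (ENNReal.rpow_ne_top_of_nonneg (by positivity) hIne)
              (ENNReal.rpow_ne_top_of_nonneg (by positivity) ENNReal.ofReal_ne_top))
            exact mul_le_mul_right (ENNReal.rpow_le_rpow hcloseR.le (by positivity)) _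
        _ = I.toReal ^ (1/p) * ε ^ (1/q) := by
            rw [ENNReal.toReal_mul, ← ENNReal.toReal_rpow, ← ENNReal.toReal_rpow,
              ENNReal.toReal_ofReal hε.le]
    have hMain : ((∑' t, L t) ^ (1/p) * (∑' t, Bq t) ^ (1/q)).toReal
        ≤ 2 * C₀ * ((C₁ ^ p * E.toReal + 2 * ε) ^ (1/p)) * (I.toReal ^ (1/q) + ε ^ (1/q)) := by
      have h1 : (∑' t, L t) ^ (1/p) * (∑' t, Bq t) ^ (1/q)
          ≤ (ENNReal.ofReal C₁ ^ p * E + ENNReal.ofReal ε * 2) ^ (1/p) *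
            (ENNReal.ofReal C₀ * (2 * (I ^ (1/q) + ENNReal.ofReal ε ^ (1/q)))) := by
        apply mul_le_mul'
        · exact ENNReal.rpow_le_rpow hLsum (by positivity)
        · calc (∑' t, Bq t) ^ (1/q)
              ≤ (ENNReal.ofReal C₀ ^ q * G) ^ (1/q) :=
                ENNReal.rpow_le_rpow hgtbound (by positivity)
            _ = ENNReal.ofReal C₀ * G ^ (1/q) := by
                rw [ENNReal.mul_rpow_of_nonneg _ _ (by positivity), ← ENNReal.rpow_mul,
                  mul_one_div, div_self hq0.ne', ENNReal.rpow_one]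
            _ ≤ ENNReal.ofReal C₀ * (2 * (I ^ (1/q) + ENNReal.ofReal ε ^ (1/q))) :=
                mul_le_mul_right hGq _
      have hfin3 : (ENNReal.ofReal C₁ ^ p * E + ENNReal.ofReal ε * 2) ^ (1/p) *
          (ENNReal.ofReal C₀ * (2 * (I ^ (1/q) + ENNReal.ofReal ε ^ (1/q)))) ≠ ⊤ := by
        apply ENNReal.mul_ne_top (ENNReal.rpow_ne_top_of_nonneg (by positivity) hLsumfin)
        apply ENNReal.mul_ne_top ENNReal.ofReal_ne_top
        apply ENNReal.mul_ne_top (by simp)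
        exact ENNReal.add_ne_top.mpr
          ⟨ENNReal.rpow_ne_top_of_nonneg (by positivity) hIne,
           ENNReal.rpow_ne_top_of_nonneg (by positivity) ENNReal.ofReal_ne_top⟩
      refine le_trans (ENNReal.toReal_mono hfin3 h1) (le_of_eq ?_)
      rw [ENNReal.toReal_mul, ← ENNReal.toReal_rpow, ENNReal.toReal_add
        (ENNReal.mul_ne_top (ENNReal.rpow_ne_top_of_nonneg hp0.le ENNReal.ofReal_ne_top) hEtop)
        (ENNReal.mul_ne_top ENNReal.ofReal_ne_top (by simp)),
        ENNReal.toReal_mul, ENNReal.toReal_mul, ← ENNReal.toReal_rpow,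
        ENNReal.toReal_ofReal hC₁.le, ENNReal.toReal_ofReal hε.le,
        ENNReal.toReal_mul, ENNReal.toReal_ofReal hC₀.le, ENNReal.toReal_mul,
        ENNReal.toReal_add (ENNReal.rpow_ne_top_of_nonneg (by positivity) hIne)
          (ENNReal.rpow_ne_top_of_nonneg (by positivity) ENNReal.ofReal_ne_top),
        ← ENNReal.toReal_rpow, ← ENNReal.toReal_rpow, ENNReal.toReal_ofReal hε.le]
      norm_num
      ring
    calc I.toReal
        = (∫ x in Ω, v x * g x) + α * (∫ x in Ω, v x * ω x ^ p) + ∫ x in Ω, v x * r x :=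
          hIsplit
      _ = (∫ x in Ω, v x * g x) + ∫ x in Ω, v x * r x := by rw [hmean, mul_zero, add_zero]
      _ ≤ ((∑' t, L t) ^ (1/p) * (∑' t, Bq t) ^ (1/q)).toReal
          + I.toReal ^ (1/p) * ε ^ (1/q) :=
          add_le_add hvg_bound ((le_abs_self _).trans hRbound)
      _ ≤ 2 * C₀ * ((C₁ ^ p * E.toReal + 2 * ε) ^ (1/p)) * (I.toReal ^ (1/q) + ε ^ (1/q))
          + I.toReal ^ (1/p) * ε ^ (1/q) := add_le_add_left hMain _
      _ = _ := by ring
  -- pass to the limit ε → 0⁺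
  have hIpos : 0 < I.toReal := ENNReal.toReal_pos hI0 hIne
  have hcont : Filter.Tendsto (fun ε : ℝ => I.toReal ^ (1/p) * ε ^ (1/q)
      + 2 * C₀ * ((C₁ ^ p * E.toReal + 2 * ε) ^ (1/p)) * (I.toReal ^ (1/q) + ε ^ (1/q)))
      (nhdsWithin 0 (Set.Ioi 0)) (nhds (I.toReal ^ (1/p) * (0:ℝ) ^ ((1:ℝ)/q)
      + 2 * C₀ * ((C₁ ^ p * E.toReal + 2 * 0) ^ (1/p)) *
        (I.toReal ^ (1/q) + (0:ℝ) ^ ((1:ℝ)/q)))) := by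
    apply Filter.Tendsto.mono_left ?_ nhdsWithin_le_nhds
    have c1 : ContinuousAt (fun ε : ℝ => ε ^ ((1:ℝ)/q)) 0 :=
      Real.continuousAt_rpow_const 0 _ (Or.inr (by positivity))
    have c2 : ContinuousAt (fun ε : ℝ => (C₁ ^ p * E.toReal + 2 * ε) ^ ((1:ℝ)/p)) 0 := by
      exact (Real.continuousAt_rpow_const _ _ (Or.inr (by positivity))).comp
        ((continuous_const.add (continuous_const.mul continuous_id)).continuousAt)
    exact ((continuousAt_const.mul c1).add
      ((continuousAt_const.mul c2).mul (continuousAt_const.add c1)))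
  have hle0 : I.toReal ≤ I.toReal ^ (1/p) * (0:ℝ) ^ ((1:ℝ)/q)
      + 2 * C₀ * ((C₁ ^ p * E.toReal + 2 * 0) ^ (1/p)) *
        (I.toReal ^ (1/q) + (0:ℝ) ^ ((1:ℝ)/q)) := by
    refine ge_of_tendsto hcont ?_
    filter_upwards [self_mem_nhdsWithin] with ε hε
    exact key ε hε
  rw [Real.zero_rpow (one_div_pos.mpr hq0).ne'] at hle0
  simp only [mul_zero, add_zero, zero_add] at hle0
  -- hle0 : I.toReal ≤ 2 * C₀ * (C₁ ^ p * E.toReal) ^ (1/p) * I.toReal ^ (1/q)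
  have h5 : (C₁ ^ p * E.toReal) ^ ((1:ℝ)/p) = C₁ * E.toReal ^ ((1:ℝ)/p) := by
    rw [Real.mul_rpow (by positivity) ENNReal.toReal_nonneg, ← Real.rpow_mul hC₁.le,
      mul_one_div, div_self hp0.ne', Real.rpow_one]
  have hIq : I.toReal = I.toReal ^ ((1:ℝ)/p) * I.toReal ^ ((1:ℝ)/q) := by
    rw [← Real.rpow_add hIpos, hpq, Real.rpow_one]
  have hIqpos : 0 < I.toReal ^ ((1:ℝ)/q) := Real.rpow_pos_of_pos hIpos _
  have h6 : I.toReal ^ ((1:ℝ)/p) ≤ 2 * C₀ * C₁ * E.toReal ^ ((1:ℝ)/p) := by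
    have h7 : I.toReal ^ ((1:ℝ)/p) * I.toReal ^ ((1:ℝ)/q)
        ≤ (2 * C₀ * (C₁ * E.toReal ^ ((1:ℝ)/p))) * I.toReal ^ ((1:ℝ)/q) := by
      rw [← hIq]
      calc I.toReal ≤ 2 * C₀ * (C₁ ^ p * E.toReal) ^ ((1:ℝ)/p) * I.toReal ^ ((1:ℝ)/q) := hle0
        _ = (2 * C₀ * (C₁ * E.toReal ^ ((1:ℝ)/p))) * I.toReal ^ ((1:ℝ)/q) := by rw [h5]
    have h8 := (mul_le_mul_iff_left₀ hIqpos).mp h7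
    calc I.toReal ^ ((1:ℝ)/p) ≤ 2 * C₀ * (C₁ * E.toReal ^ ((1:ℝ)/p)) := h8
      _ = 2 * C₀ * C₁ * E.toReal ^ ((1:ℝ)/p) := by ring
  have h9 : I.toReal ≤ (2 * C₀ * C₁) ^ p * E.toReal := by
    have h8 := Real.rpow_le_rpow (by positivity) h6 hp0.le
    rw [← Real.rpow_mul ENNReal.toReal_nonneg, one_div_mul_cancel hp0.ne',
      Real.rpow_one] at h8
    rw [Real.mul_rpow (by positivity) (by positivity),
      ← Real.rpow_mul ENNReal.toReal_nonneg, one_div_mul_cancel hp0.ne',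
      Real.rpow_one] at h8
    exact h8
  calc I = ENNReal.ofReal I.toReal := (ENNReal.ofReal_toReal hIne).symm
    _ ≤ ENNReal.ofReal ((2 * C₀ * C₁) ^ p * E.toReal) := ENNReal.ofReal_le_ofReal h9
    _ = ENNReal.ofReal (2 * C₀ * C₁) ^ p * E := by
        rw [ENNReal.ofReal_mul (by positivity),
          ← ENNReal.ofReal_rpow_of_nonneg (by positivity) hp0.le,
          ENNReal.ofReal_toReal hEtop]
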